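/- In the graph F, there exist non-adjacent vertices u, v, a shortest uv-path P of length 3, and an induced uv-path Q of length 4, such that Q does not dominate P. -/
import Mathlib


open SimpleGraph

/-- The internal vertices of a walk (support minus the two endpoints). -/
def internals {V : Type*} {G : SimpleGraph V} {u v : V} (W : G.Walk u v) : List V :=
  W.support.tail.dropLast

/-- A `uv`-walk `W` dominates a `uv`-walk `W'` if every internal vertex of `W'`
is adjacent to some internal vertex of `W` or belongs to `W`. -/
def Dominates {V : Type*} (G : SimpleGraph V) {u v : V} (W W' : G.Walk u v) : Prop :=
  ∀ x ∈ internals W', x ∈ W.support ∨ ∃ y ∈ internals W, G.Adj x y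

/-- An induced (chordless) path: a path such that any two vertices on it are
adjacent in `G` only if they are consecutive on the path. -/
def IsInducedPath {V : Type*} (G : SimpleGraph V) {u v : V} (W : G.Walk u v) : Prop :=
  W.IsPath ∧ ∀ a ∈ W.support, ∀ b ∈ W.support, G.Adj a b → W.toSubgraph.Adj a b

/-- `G` contains a hole: an induced (chordless) cycle of length at least 5. -/
def HasHole {V : Type*} (G : SimpleGraph V) : Prop :=
  ∃ (x : V) (c : G.Walk x x), c.IsCycle ∧ 5 ≤ c.length ∧
    ∀ a ∈ c.support, ∀ b ∈ c.support, G.Adj a b → c.toSubgraph.Adj a b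

/-- The house graph: 5-cycle `x0x1x2x3x4` plus the chord `x1x4`. -/
def houseGraph : SimpleGraph (Fin 5) :=
  SimpleGraph.fromEdgeSet {s(0,1), s(1,2), s(2,3), s(3,4), s(4,0), s(1,4)}

/-- The domino: 6-cycle `x0x1x2x3x4x5` plus the chord `x1x4`. -/
def dominoGraph : SimpleGraph (Fin 6) :=
  SimpleGraph.fromEdgeSet {s(0,1), s(1,2), s(2,3), s(3,4), s(4,5), s(5,0), s(1,4)}

/-- The graph `X5`. -/
def x5Graph : SimpleGraph (Fin 6) :=
  SimpleGraph.fromEdgeSet {s(0,1), s(0,5), s(1,2), s(1,5), s(2,3), s(2,5), s(3,4), s(4,5)}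

/-- The graph `F`. -/
def fGraph : SimpleGraph (Fin 7) :=
  SimpleGraph.fromEdgeSet {s(0,1), s(0,6), s(1,2), s(5,6), s(2,6), s(2,3), s(2,5), s(3,4), s(4,5)}

instance fAdjDec : DecidableRel fGraph.Adj := fun a b =>
  decidable_of_iff ((s(a,b) = s(0,1) ∨ s(a,b) = s(0,6) ∨ s(a,b) = s(1,2) ∨ s(a,b) = s(5,6) ∨ s(a,b) = s(2,6) ∨ s(a,b) = s(2,3) ∨ s(a,b) = s(2,5) ∨ s(a,b) = s(3,4) ∨ s(a,b) = s(4,5)) ∧ a ≠ b)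
    (by rw [fGraph, fromEdgeSet_adj]; simp [Set.mem_insert_iff])

def P : fGraph.Walk 1 4 :=
  .cons (by decide) (.cons (by decide : fGraph.Adj 2 3) (.cons (by decide) .nil))
def Q : fGraph.Walk 1 4 :=
  .cons (by decide : fGraph.Adj 1 0) (.cons (by decide : fGraph.Adj 0 6)
    (.cons (by decide : fGraph.Adj 6 5) (.cons (by decide) .nil)))

theorem f_m3_not_dominates_sp :
    ∃ u v : Fin 7, ¬ fGraph.Adj u v ∧
      ∃ (P Q : fGraph.Walk u v),
        P.IsPath ∧ P.length = 3 ∧ P.length = fGraph.dist u v ∧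
        IsInducedPath fGraph Q ∧ Q.length = 4 ∧
        ¬ Dominates fGraph Q P := by
  refine ⟨1, 4, by decide, P, Q, by rw [Walk.isPath_def]; decide, rfl, ?_, ⟨by rw [Walk.isPath_def]; decide, ?_⟩, rfl, ?_⟩
  · have hle : fGraph.dist 1 4 ≤ 3 := le_trans (dist_le P) (by norm_num [P])
    have hreach : fGraph.Reachable 1 4 := ⟨P⟩
    have hno : ∀ a : Fin 7, ¬ (fGraph.Adj 1 a ∧ fGraph.Adj a 4) := by decide
    refine le_antisymm ?_ hle
    by_contra h
    push_neg at h
    obtain ⟨w, hw⟩ := hreach.exists_walk_length_eq_dist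
    have hlt : w.length < 3 := by rw [hw]; simpa [P] using h
    have h0 := w.getVert_zero
    have hn := w.getVert_length
    interval_cases hL : w.length
    · exact (by decide : (1:Fin 7) ≠ 4) (Walk.eq_of_length_eq_zero hL)
    · have := w.adj_getVert_succ (i := 0) (by omega)
      rw [h0] at this; rw [show (0+1) = 1 by rfl, hn] at this
      exact (by decide : ¬ fGraph.Adj 1 4) this
    · have h1 := w.adj_getVert_succ (i := 0) (by omega)
      have h2 := w.adj_getVert_succ (i := 1) (by omega)
      rw [h0, show (0+1)=1 by rfl] at h1
      rw [show (1+1)=2 by rfl, hn] at h2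
      exact hno _ ⟨h1, h2⟩
  · intro a ha b hb hab
    rw [← SimpleGraph.Subgraph.mem_edgeSet, Walk.mem_edges_toSubgraph]
    revert ha hb hab
    revert a b
    decide
  · unfold Dominates internals
    decide
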